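/- arXiv:1111.4869 — 5 statements merged into one kernel-verified Lean document; each statement's English description precedes it below -/
import Mathlib

section
/- Let M:[0,∞)→[0,∞) satisfy condition (M) with constants d_M ≥ 2 and D_M > 2. Then for every λ ≥ 1/d_M and all r, s ≥ 0 one has (M(r)/r)·s ≤ (1 − D_M^{−1})(λ D_M)^{−1/(D_M−1)} M(r) + λ M(s), where r ↦ M(r)/r is extended by continuity to the value 0 at r = 0. -/
open Real Set

/-- Condition **(M)** from the paper: `M : [0,∞) → [0,∞)` is nonconstant,
`M(ar) ≤ a^{D_M} M(r)` for `a ≥ 1` and `M(ar) ≤ a^{d_M} M(r)` for `a ∈ (0,1)`. -/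
def CondM (M : ℝ → ℝ) (dM DM : ℝ) : Prop :=
  (∀ r : ℝ, 0 ≤ r → 0 ≤ M r) ∧
  (∃ r s : ℝ, 0 ≤ r ∧ 0 ≤ s ∧ M r ≠ M s) ∧
  (∀ r : ℝ, 0 ≤ r → ∀ a : ℝ, 1 ≤ a → M (a * r) ≤ a ^ DM * M r) ∧
  (∀ r : ℝ, 0 ≤ r → ∀ a : ℝ, 0 < a → a < 1 → M (a * r) ≤ a ^ dM * M r)

/-- Young's inequality in the form needed below:
`t ≤ (1 - DM⁻¹)(lam·DM)^{-1/(DM-1)} + lam·t^{DM}` for all `t ≥ 0`. -/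
theorem myYoung (lam DM : ℝ) (hDM : 2 < DM) (hlam : 0 < lam) (t : ℝ) (ht : 0 ≤ t) :
    t ≤ (1 - DM⁻¹) * (lam * DM) ^ (-1 / (DM - 1)) + lam * t ^ DM := by
  have hDM0 : (0:ℝ) < DM := by linarith
  have hK : 0 < lam * DM := by positivity
  have hpq : DM.HolderConjugate (DM / (DM - 1)) :=
    Real.HolderConjugate.conjExponent (by linarith)
  have h := Real.young_inequality_of_nonneg
    (a := t * (lam * DM) ^ (DM⁻¹)) (b := (lam * DM) ^ (-DM⁻¹))
    (mul_nonneg ht (rpow_nonneg hK.le _)) (rpow_nonneg hK.le _) hpq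
  have hab : t * (lam * DM) ^ (DM⁻¹) * (lam * DM) ^ (-DM⁻¹) = t := by
    rw [mul_assoc, ← Real.rpow_add hK, add_neg_cancel, rpow_zero, mul_one]
  have h1 : (t * (lam * DM) ^ (DM⁻¹)) ^ DM / DM = lam * t ^ DM := by
    rw [Real.mul_rpow ht (rpow_nonneg hK.le _), ← Real.rpow_mul hK.le,
      inv_mul_cancel₀ hDM0.ne', rpow_one]
    field_simp
  have h2 : ((lam * DM) ^ (-DM⁻¹)) ^ (DM / (DM - 1)) / (DM / (DM - 1))
      = (1 - DM⁻¹) * (lam * DM) ^ (-1 / (DM - 1)) := by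
    rw [← Real.rpow_mul hK.le]
    have he1 : -DM⁻¹ * (DM / (DM - 1)) = -1 / (DM - 1) := by field_simp
    have he2 : (DM / (DM - 1))⁻¹ = 1 - DM⁻¹ := by
      rw [inv_div]; field_simp
    rw [he1, div_eq_mul_inv, he2, mul_comm]
  rw [hab, h1, h2] at h
  linarith

/-- Lemma (ni1): for `λ ≥ 1/d_M` and `r, s ≥ 0`,
`(M(r)/r)·s ≤ (1 − D_M⁻¹)(λD_M)^{−1/(D_M−1)} M(r) + λ M(s)`.
(At `r = 0` both `M 0 / 0 = 0` in Lean and the continuous extension of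
`r ↦ M(r)/r` vanish, so the statement is faithful for all `r ≥ 0`.) -/
theorem stmt_0 (M : ℝ → ℝ) (dM DM : ℝ) (hdM : 2 ≤ dM) (hDM : 2 < DM)
    (hM : CondM M dM DM) (lam : ℝ) (hlam : 1 / dM ≤ lam)
    (r s : ℝ) (hr : 0 ≤ r) (hs : 0 ≤ s) :
    (M r / r) * s ≤
      (1 - DM⁻¹) * (lam * DM) ^ (-1 / (DM - 1)) * M r + lam * M s := by
  obtain ⟨hpos, -, hup, hdown⟩ := hM
  have hdM0 : (0:ℝ) < dM := by linarith
  have hlam0 : 0 < lam := lt_of_lt_of_le (by positivity) hlam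
  have hlamdM : 1 ≤ lam * dM := by
    rw [div_le_iff₀ hdM0] at hlam; linarith
  set C := (1 - DM⁻¹) * (lam * DM) ^ (-1 / (DM - 1)) with hC
  have hC0 : 0 ≤ C := by
    apply mul_nonneg _ (rpow_nonneg (by positivity) _)
    have : DM⁻¹ ≤ 1 := by
      rw [inv_le_one_iff₀]; right; linarith
    linarith
  have hMr : 0 ≤ M r := hpos r hr
  have hMs : 0 ≤ M s := hpos s hs
  rcases eq_or_lt_of_le hr with rfl | hr0
  · simp only [div_zero, zero_mul]
    positivity
  -- r > 0
  set t := s / r with htdef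
  have ht : 0 ≤ t := div_nonneg hs hr0.le
  have hst : s = t * r := by rw [htdef, div_mul_cancel₀ s hr0.ne']
  have hLHS : M r / r * s = t * M r := by
    rw [hst]; field_simp
  rw [hLHS]
  rcases le_or_gt t 1 with ht1 | ht1
  · -- t ≤ 1 : M s ≥ t^DM * M r
    have hMsge : t ^ DM * M r ≤ M s := by
      rcases eq_or_lt_of_le ht with h0 | ht0
      · rw [← h0, Real.zero_rpow (by positivity : DM ≠ 0), zero_mul]; exact hMs
      · have hinv : 1 ≤ t⁻¹ := one_le_inv_iff₀.mpr ⟨ht0, ht1⟩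
        have h := hup s hs t⁻¹ hinv
        have heq : t⁻¹ * s = r := by rw [hst]; field_simp
        rw [heq, Real.inv_rpow ht0.le] at h
        have htDM : 0 < t ^ DM := Real.rpow_pos_of_pos ht0 DM
        calc t ^ DM * M r ≤ t ^ DM * ((t ^ DM)⁻¹ * M s) :=
              mul_le_mul_of_nonneg_left h htDM.le
          _ = M s := by field_simp
    have hy := myYoung lam DM hDM hlam0 t ht
    nlinarith [mul_le_mul_of_nonneg_left hMsge hlam0.le]
  · -- t > 1 : M s ≥ t^dM * M r, and t ≤ C + lam * t^dM via Bernoulli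
    have hMsge : t ^ dM * M r ≤ M s := by
      have hinv0 : 0 < t⁻¹ := by positivity
      have hinv1 : t⁻¹ < 1 := by rw [inv_lt_one_iff₀]; right; exact ht1
      have h := hdown s hs t⁻¹ hinv0 hinv1
      have heq : t⁻¹ * s = r := by rw [hst]; field_simp
      rw [heq, Real.inv_rpow (by positivity)] at h
      have htdM : 0 < t ^ dM := Real.rpow_pos_of_pos (by linarith) dM
      calc t ^ dM * M r ≤ t ^ dM * ((t ^ dM)⁻¹ * M s) := by
            apply mul_le_mul_of_nonneg_left h htdM.le
        _ = M s := by field_simp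
    have hy1 := myYoung lam DM hDM hlam0 1 zero_le_one
    rw [Real.one_rpow, mul_one] at hy1
    -- Bernoulli: 1 + dM * (t - 1) ≤ t ^ dM
    have hbern : 1 + dM * (t - 1) ≤ t ^ dM := by
      have := one_add_mul_self_le_rpow_one_add (s := t - 1) (by linarith) (by linarith : 1 ≤ dM)
      simpa using this
    have hkey : t ≤ C + lam * t ^ dM := by
      nlinarith [mul_le_mul_of_nonneg_left hbern hlam0.le]
    nlinarith [mul_le_mul_of_nonneg_left hMsge hlam0.le, mul_le_mul_of_nonneg_right hkey hMr]
end

section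
/- Let M:[0,∞)→[0,∞) satisfy condition (M) with constants d_M ≥ 2 and D_M > 2. Then for every λ ≥ 1/d_M and all r, s ≥ 0 one has (M(r)/r²)·s² ≤ (1 − 2D_M^{−1})(λ D_M)^{−2/(D_M−2)} M(r) + 2λ M(s), where r ↦ M(r)/r² is extended by continuity to r = 0. -/
open Real Set

/-- Key scalar (Young) inequality: `x² ≤ (1-2/D)(λD)^{-2/(D-2)} + 2λ x^D`. -/
lemma key_young {DM lam : ℝ} (hDM : 2 < DM) (hlam : 0 < lam) {x : ℝ} (hx : 0 ≤ x) :
    x ^ 2 ≤ (1 - 2 * DM⁻¹) * (lam * DM) ^ (-2 / (DM - 2)) + 2 * lam * x ^ DM := by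
  have hD0 : (0:ℝ) < DM := by linarith
  have hD2 : (0:ℝ) < DM - 2 := by linarith
  have hlD : 0 < lam * DM := by positivity
  have hpq : (DM / 2).HolderConjugate (DM / (DM - 2)) := by
    rw [Real.holderConjugate_iff]; constructor
    · rw [lt_div_iff₀ (by norm_num)]; linarith
    · field_simp; ring
  have ha : (0:ℝ) ≤ x ^ 2 * (lam * DM) ^ ((2:ℝ) / DM) := by positivity
  have hb : (0:ℝ) ≤ (lam * DM) ^ (-(2:ℝ) / DM) := by positivity
  have h := Real.young_inequality_of_nonneg ha hb hpq
  have e1 : x ^ 2 * (lam * DM) ^ ((2:ℝ) / DM) * (lam * DM) ^ (-(2:ℝ) / DM) = x ^ 2 := by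
    rw [mul_assoc, ← Real.rpow_add hlD, show (2:ℝ)/DM + -2/DM = 0 by ring,
      Real.rpow_zero, mul_one]
  have e2 : (x ^ 2 * (lam * DM) ^ ((2:ℝ) / DM)) ^ (DM / 2) = x ^ DM * (lam * DM) := by
    rw [Real.mul_rpow (by positivity) (by positivity), ← Real.rpow_natCast x 2,
      ← Real.rpow_mul hx, ← Real.rpow_mul hlD.le]
    push_cast
    rw [show (2:ℝ) * (DM / 2) = DM by ring, show (2:ℝ) / DM * (DM / 2) = 1 by field_simp,
      Real.rpow_one]
  have e3 : ((lam * DM) ^ (-(2:ℝ) / DM)) ^ (DM / (DM - 2)) = (lam * DM) ^ (-2 / (DM - 2)) := by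
    rw [← Real.rpow_mul hlD.le]
    congr 1
    field_simp
  rw [e1, e2, e3] at h
  calc x ^ 2 ≤ x ^ DM * (lam * DM) / (DM / 2)
        + (lam * DM) ^ (-2 / (DM - 2)) / (DM / (DM - 2)) := h
    _ = (1 - 2 * DM⁻¹) * (lam * DM) ^ (-2 / (DM - 2)) + 2 * lam * x ^ DM := by
        field_simp
        ring

/-- Bernoulli-type: for `t ≥ 1`, `d ≥ 2`, `λd ≥ 1`: `t² ≤ (1 - 2λ) + 2λ t^d`. -/
lemma key_bernoulli {dM lam : ℝ} (hdM : 2 ≤ dM) (hld : 1 ≤ lam * dM) {t : ℝ} (ht : 1 ≤ t) :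
    t ^ 2 ≤ (1 - 2 * lam) + 2 * lam * t ^ dM := by
  have hl : 0 < lam := by nlinarith
  have hu : (0:ℝ) ≤ t ^ 2 - 1 := by nlinarith
  have hber := one_add_mul_self_le_rpow_one_add (s := t ^ 2 - 1)
    (by linarith) (p := dM / 2) (by linarith)
  have he : ((1:ℝ) + (t ^ 2 - 1)) ^ (dM / 2) = t ^ dM := by
    rw [show (1:ℝ) + (t ^ 2 - 1) = t ^ 2 by ring, ← Real.rpow_natCast t 2,
      ← Real.rpow_mul (by linarith)]
    push_cast
    rw [show (2:ℝ) * (dM / 2) = dM by ring]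
  rw [he] at hber
  -- hber : 1 + dM/2 * (t^2 - 1) ≤ t^dM
  nlinarith [mul_le_mul_of_nonneg_left hber (by positivity : (0:ℝ) ≤ 2 * lam)]

/-- Lemma (ni2): for `λ ≥ 1/d_M` and `r, s ≥ 0`,
`(M(r)/r²)·s² ≤ (1 − 2D_M⁻¹)(λD_M)^{−2/(D_M−2)} M(r) + 2λ M(s)`.
For `r > 0` this is stated directly; at `r = 0` the quantity `M(r)/r²` is
replaced by its continuous extension, i.e. the limit of `M(t)/t²` as `t → 0⁺`. -/
theorem stmt_1 (M : ℝ → ℝ) (dM DM : ℝ) (hdM : 2 ≤ dM) (hDM : 2 < DM)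
    (hM : CondM M dM DM) (lam : ℝ) (hlam : 1 / dM ≤ lam)
    (s : ℝ) (hs : 0 ≤ s) :
    (∀ r : ℝ, 0 < r →
      (M r / r ^ 2) * s ^ 2 ≤
        (1 - 2 * DM⁻¹) * (lam * DM) ^ (-2 / (DM - 2)) * M r + 2 * lam * M s) ∧
    (∀ c : ℝ,
      Filter.Tendsto (fun t => M t / t ^ 2) (nhdsWithin 0 (Set.Ioi 0)) (nhds c) →
      c * s ^ 2 ≤
        (1 - 2 * DM⁻¹) * (lam * DM) ^ (-2 / (DM - 2)) * M 0 + 2 * lam * M s) := by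
  obtain ⟨hMpos, -, hMD, hMd⟩ := hM
  have hd0 : (0:ℝ) < dM := by linarith
  have hl : 0 < lam := lt_of_lt_of_le (by positivity) hlam
  have hld : 1 ≤ lam * dM := by
    rw [div_le_iff₀ hd0] at hlam
    linarith
  set C : ℝ := (1 - 2 * DM⁻¹) * (lam * DM) ^ (-2 / (DM - 2)) with hC
  have hC0 : 0 ≤ C := by
    have : (0:ℝ) < DM⁻¹ := by positivity
    have h2 : 2 * DM⁻¹ < 1 := by
      rw [mul_inv_lt_iff₀ (by linarith)]
      linarith
    have : (0:ℝ) ≤ (lam * DM) ^ (-2 / (DM - 2)) := Real.rpow_nonneg (by positivity) _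
    nlinarith
  have main : ∀ r : ℝ, 0 < r →
      (M r / r ^ 2) * s ^ 2 ≤ C * M r + 2 * lam * M s := by
    intro r hr
    set t : ℝ := s / r with htdef
    have ht0 : 0 ≤ t := by positivity
    have hrne : r ≠ 0 := ne_of_gt hr
    have hst : s = t * r := by rw [htdef, div_mul_cancel₀ _ hrne]
    have hlhs : (M r / r ^ 2) * s ^ 2 = t ^ 2 * M r := by
      rw [hst]; field_simp
    rw [hlhs]
    have hMr : 0 ≤ M r := hMpos r hr.le
    rcases le_or_gt t 1 with htle | htgt
    · -- s ≤ r : use D-condition to get t^DM * M r ≤ M s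
      have hts : t ^ DM * M r ≤ M s := by
        rcases eq_or_lt_of_le ht0 with h0 | h0
        · rw [← h0, Real.zero_rpow (by positivity : (0:ℝ) < DM).ne', zero_mul]
          exact hMpos s hs
        · rcases eq_or_lt_of_le htle with h1 | h1
          · rw [h1, Real.one_rpow, one_mul]
            have : s = r := by rw [hst, h1, one_mul]
            rw [this]
          · have ha1 : 1 ≤ t⁻¹ := one_le_inv_iff₀.mpr ⟨h0, htle⟩
            have := hMD s hs t⁻¹ ha1
            rw [show t⁻¹ * s = r by rw [hst]; field_simp] at this
            have hpow : 0 < t ^ DM := Real.rpow_pos_of_pos h0 _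
            rw [Real.inv_rpow h0.le] at this
            calc t ^ DM * M r ≤ t ^ DM * ((t ^ DM)⁻¹ * M s) := by
                  apply mul_le_mul_of_nonneg_left this hpow.le
              _ = M s := by field_simp
      have hY := key_young hDM hl ht0
      calc t ^ 2 * M r ≤ (C + 2 * lam * t ^ DM) * M r := by
            apply mul_le_mul_of_nonneg_right hY hMr
        _ = C * M r + 2 * lam * (t ^ DM * M r) := by ring
        _ ≤ C * M r + 2 * lam * M s := by nlinarith
    · -- s > r : use d-condition to get t^dM * M r ≤ M s
      have ht0' : 0 < t := by linarith
      have hts : t ^ dM * M r ≤ M s := by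
        have ha1 : t⁻¹ < 1 := by
          rw [inv_lt_one_iff₀]; right; exact htgt
        have := hMd s hs t⁻¹ (by positivity) ha1
        rw [show t⁻¹ * s = r by rw [hst]; field_simp] at this
        have hpow : 0 < t ^ dM := Real.rpow_pos_of_pos ht0' _
        rw [Real.inv_rpow ht0'.le] at this
        calc t ^ dM * M r ≤ t ^ dM * ((t ^ dM)⁻¹ * M s) := by
              apply mul_le_mul_of_nonneg_left this hpow.le
          _ = M s := by field_simp
      have hB := key_bernoulli hdM hld htgt.le
      have hY1 : (1:ℝ) - 2 * lam ≤ C := by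
        have := key_young hDM hl (x := 1) zero_le_one
        rw [Real.one_rpow, one_pow] at this
        linarith
      calc t ^ 2 * M r ≤ ((1 - 2 * lam) + 2 * lam * t ^ dM) * M r := by
            apply mul_le_mul_of_nonneg_right hB hMr
        _ ≤ (C + 2 * lam * t ^ dM) * M r := by nlinarith [Real.rpow_pos_of_pos ht0' dM]
        _ = C * M r + 2 * lam * (t ^ dM * M r) := by ring
        _ ≤ C * M r + 2 * lam * M s := by nlinarith
  refine ⟨main, ?_⟩
  intro c hc
  -- M 0 = 0
  have hM0 : M 0 = 0 := by
    have h1 := hMd 0 le_rfl (1/2) (by norm_num) (by norm_num)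
    rw [mul_zero] at h1
    have h2 : ((1:ℝ)/2) ^ dM < 1 :=
      Real.rpow_lt_one (by norm_num) (by norm_num) hd0
    have h3 : 0 ≤ M 0 := hMpos 0 le_rfl
    nlinarith
  have hMr0 : Filter.Tendsto M (nhdsWithin 0 (Set.Ioi 0)) (nhds 0) := by
    have : Filter.Tendsto (fun r : ℝ => (M r / r ^ 2) * r ^ 2)
        (nhdsWithin 0 (Set.Ioi 0)) (nhds (c * 0)) := by
      apply hc.mul
      apply Filter.Tendsto.mono_left _ nhdsWithin_le_nhds
      have : Filter.Tendsto (fun r : ℝ => r ^ 2) (nhds 0) (nhds ((0:ℝ) ^ 2)) := by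
        exact (continuous_pow 2).tendsto 0
      simpa using this
    rw [mul_zero] at this
    apply this.congr'
    filter_upwards [self_mem_nhdsWithin] with r (hr : r ∈ Set.Ioi 0)
    have hrne : r ≠ 0 := ne_of_gt (Set.mem_Ioi.mp hr)
    field_simp
  have hlim1 : Filter.Tendsto (fun r : ℝ => (M r / r ^ 2) * s ^ 2)
      (nhdsWithin 0 (Set.Ioi 0)) (nhds (c * s ^ 2)) := hc.mul_const _
  have hlim2 : Filter.Tendsto (fun r : ℝ => C * M r + 2 * lam * M s)
      (nhdsWithin 0 (Set.Ioi 0)) (nhds (C * 0 + 2 * lam * M s)) :=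
    ((hMr0.const_mul C).add tendsto_const_nhds)
  have := le_of_tendsto_of_tendsto hlim1 hlim2 ?_
  · rw [hM0]
    simpa using this
  · filter_upwards [self_mem_nhdsWithin] with r hr
    exact main r hr
end

section
/- Let n ≥ 1 and p > 2. There do not exist finite constants C₁ and C₂ with C₂ ≤ p^p such that the inequality ∫₀^∞ (r|u(r)|)^p dμ_n(r) ≤ C₁ ∫₀^∞ |u(r)|^p dμ_n(r) + C₂ ∫₀^∞ |u'(r)|^p dμ_n(r) holds for all continuous and piecewise C¹ functions u:[0,∞)→ℝ (a family of counterexamples is given by u_α(r) = exp(α r²/(2p)) with α → 1⁻). -/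
open MeasureTheory Real Set Filter

/-- The measure `dμ_n(r) = r^{n-1} e^{-r²/2} dr` on `(0,∞)`. -/
noncomputable def muN (n : ℕ) : Measure ℝ :=
  (volume.restrict (Set.Ioi (0 : ℝ))).withDensity
    (fun r => ENNReal.ofReal (r ^ (n - 1) * Real.exp (-r ^ 2 / 2)))

/-- `u : [0,∞) → ℝ` is continuous and piecewise `C¹`: it is continuous on `[0,∞)`
and, off a finite set `S`, differentiable with continuous derivative. -/
def PiecewiseC1 (u : ℝ → ℝ) : Prop :=
  ContinuousOn u (Set.Ici 0) ∧
  ∃ S : Set ℝ, S.Finite ∧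
    (∀ x ∈ Set.Ici (0 : ℝ) \ S, DifferentiableAt ℝ u x) ∧
    ContinuousOn (deriv u) (Set.Ici (0 : ℝ) \ S)

/-- Value of the basic Gaussian-moment lintegral. -/
lemma lint_Ioi_eq {q b : ℝ} (hq : -1 < q) (hb : 0 < b) :
    ∫⁻ r in Set.Ioi (0 : ℝ), ENNReal.ofReal (r ^ q * Real.exp (-b * r ^ 2)) =
      ENNReal.ofReal (b ^ (-(q + 1) / 2) * (1 / 2) * Real.Gamma ((q + 1) / 2)) := by
  rw [← MeasureTheory.ofReal_integral_eq_lintegral_ofReal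
      (integrableOn_rpow_mul_exp_neg_mul_sq hb hq)]
  · congr 1
    rw [show (∫ r in Set.Ioi (0:ℝ), r ^ q * Real.exp (-b * r ^ 2))
          = ∫ r in Set.Ioi (0:ℝ), r ^ q * Real.exp (-b * r ^ (2:ℝ)) from
        setIntegral_congr_fun measurableSet_Ioi
          (fun x _ => by rw [show ((2:ℝ)) = ((2:ℕ):ℝ) by norm_num, Real.rpow_natCast])]
    rw [integral_rpow_mul_exp_neg_mul_rpow two_pos hq hb]
  · filter_upwards [ae_restrict_mem measurableSet_Ioi] with x hx
    have hx0 : (0:ℝ) < x := hx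
    positivity

/-- lintegral against `muN`, computed when the integrand combines with the density
to a Gaussian moment. -/
lemma lint_muN_eq (n : ℕ) {g : ℝ → ℝ} (hg : Measurable g) {q b A : ℝ}
    (hq : -1 < q) (hb : 0 < b) (hA : 0 ≤ A)
    (hgeq : ∀ r : ℝ, 0 < r →
      r ^ (n - 1) * Real.exp (-r ^ 2 / 2) * g r = A * (r ^ q * Real.exp (-b * r ^ 2))) :
    ∫⁻ r, ENNReal.ofReal (g r) ∂ muN n =
      ENNReal.ofReal A *
        ENNReal.ofReal (b ^ (-(q + 1) / 2) * (1 / 2) * Real.Gamma ((q + 1) / 2)) := by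
  rw [muN, lintegral_withDensity_eq_lintegral_mul _
      (by fun_prop) hg.ennreal_ofReal]
  have : ∀ r ∈ Set.Ioi (0:ℝ),
      ((fun r => ENNReal.ofReal (r ^ (n - 1) * Real.exp (-r ^ 2 / 2))) *
        fun r => ENNReal.ofReal (g r)) r
        = ENNReal.ofReal A * ENNReal.ofReal (r ^ q * Real.exp (-b * r ^ 2)) := by
    intro r hr
    have hr0 : (0:ℝ) < r := hr
    simp only [Pi.mul_apply]
    rw [← ENNReal.ofReal_mul (by positivity), hgeq r hr0,
      ENNReal.ofReal_mul hA]
  rw [setLIntegral_congr_fun measurableSet_Ioi this,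
    lintegral_const_mul' _ _ ENNReal.ofReal_ne_top, lint_Ioi_eq hq hb]

set_option maxHeartbeats 800000 in
/-- Optimality of `C₂`: for `n ≥ 1`, `p > 2` there are no finite constants
`C₁, C₂` with `C₂ ≤ p^p` for which `K ≤ C₁ L + C₂ 𝔐` holds for all continuous
piecewise `C¹` functions `u : [0,∞) → ℝ`. -/
theorem stmt_9 (n : ℕ) (hn : 1 ≤ n) (p : ℝ) (hp : 2 < p) :
    ¬ ∃ C₁ C₂ : ℝ, C₂ ≤ p ^ p ∧
      ∀ u : ℝ → ℝ, PiecewiseC1 u →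
        (∫⁻ r, ENNReal.ofReal ((r * |u r|) ^ p) ∂ muN n) ≤
          ENNReal.ofReal C₁ * (∫⁻ r, ENNReal.ofReal (|u r| ^ p) ∂ muN n) +
          ENNReal.ofReal C₂ * (∫⁻ r, ENNReal.ofReal (|deriv u r| ^ p) ∂ muN n) := by
  rintro ⟨C₁, C₂, hC₂, H⟩
  have hp0 : (0:ℝ) < p := by linarith
  have hn1 : (1:ℝ) ≤ (n:ℝ) := by exact_mod_cast hn
  set GaK : ℝ := Real.Gamma (((n:ℝ) - 1 + p + 1) / 2) with hGaKdef
  set GaL : ℝ := Real.Gamma (((n:ℝ) - 1 + 1) / 2) with hGaLdef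
  have hGaKpos : 0 < GaK := Real.Gamma_pos_of_pos (by linarith)
  have hGaLpos : 0 < GaL := Real.Gamma_pos_of_pos (by linarith)
  set C₁' : ℝ := max C₁ 0 with hC₁'def
  have hC₁'0 : 0 ≤ C₁' := le_max_right _ _
  -- choose t large
  obtain ⟨t, ht1, ht2⟩ :=
    (((tendsto_rpow_atTop (show (0:ℝ) < (p - 2) / 2 by linarith)).eventually_gt_atTop
      (C₁' * GaL / (2 * GaK))).and (eventually_gt_atTop 2)).exists
  have ht0 : (0:ℝ) < t := by linarith
  set b : ℝ := t⁻¹ with hbdef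
  have hb0 : (0:ℝ) < b := by positivity
  have hb2 : b < 1/2 := by
    rw [hbdef, inv_lt_comm₀ (by linarith) (by norm_num)]
    norm_num; linarith
  set α : ℝ := 1 - 2 * b with hαdef
  have hα0 : 0 < α := by simp only [hαdef]; linarith
  have hα1 : α < 1 := by simp only [hαdef]; linarith
  set c : ℝ := α / (2 * p) with hcdef
  have hc0 : 0 < c := by positivity
  set u : ℝ → ℝ := fun r => Real.exp (c * r ^ 2) with hudef
  have hderiv : ∀ r : ℝ, HasDerivAt u (Real.exp (c * r ^ 2) * (c * (2 * r))) r := by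
    intro r
    have h1 : HasDerivAt (fun r : ℝ => c * r ^ 2) (c * (2 * r)) r := by
      simpa [mul_comm] using ((hasDerivAt_pow 2 r).const_mul c)
    simpa using h1.exp
  have hderiv_eq : deriv u = fun r => Real.exp (c * r ^ 2) * (c * (2 * r)) :=
    funext fun r => (hderiv r).deriv
  have hucont : Continuous u := Real.continuous_exp.comp (continuous_const.mul (continuous_pow 2))
  have hPC1 : PiecewiseC1 u := by
    refine ⟨hucont.continuousOn, ∅, Set.finite_empty,
      fun x _ => (hderiv x).differentiableAt, ?_⟩
    rw [hderiv_eq]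
    exact (hucont.mul (continuous_const.mul (continuous_const.mul continuous_id))).continuousOn
  -- arithmetic facts
  have hqK : (-1:ℝ) < (n:ℝ) - 1 + p := by linarith
  have hqL : (-1:ℝ) < (n:ℝ) - 1 := by linarith
  have hpow_cast : ∀ r : ℝ, 0 < r → r ^ (n - 1) = r ^ ((n:ℝ) - 1) := by
    intro r hr
    rw [show ((n:ℝ) - 1) = ((n - 1 : ℕ) : ℝ) by rw [Nat.cast_sub hn]; norm_num,
      Real.rpow_natCast]
  have hexp_combine : ∀ r : ℝ,
      Real.exp (-r ^ 2 / 2) * Real.exp (c * r ^ 2) ^ p = Real.exp (-b * r ^ 2) := by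
    intro r
    rw [← Real.exp_mul, ← Real.exp_add]
    congr 1
    have hcp : c * r ^ 2 * p = α * r ^ 2 / 2 := by
      rw [hcdef]; field_simp
    rw [hcp, hαdef]; ring
  -- the three lintegral values
  set VK : ℝ := b ^ (-((n:ℝ) - 1 + p + 1) / 2) * (1 / 2) * GaK with hVKdef
  set VL : ℝ := b ^ (-((n:ℝ) - 1 + 1) / 2) * (1 / 2) * GaL with hVLdef
  have hVKpos : 0 < VK := by rw [hVKdef]; positivity
  have hVLpos : 0 < VL := by rw [hVLdef]; positivity
  have hKval : (∫⁻ r, ENNReal.ofReal ((r * |u r|) ^ p) ∂ muN n) = ENNReal.ofReal VK := by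
    rw [lint_muN_eq n (A := 1) (g := fun r => (r * |u r|) ^ p)
        ((continuous_id.mul hucont.abs).rpow_const (fun _ => Or.inr hp0.le)).measurable
        hqK hb0 zero_le_one ?_, ENNReal.ofReal_one, one_mul]
    intro r hr
    beta_reduce
    have h1 : |u r| = Real.exp (c * r ^ 2) := abs_of_pos (Real.exp_pos _)
    rw [h1, Real.mul_rpow hr.le (Real.exp_pos _).le, hpow_cast r hr, one_mul]
    calc r ^ ((n:ℝ) - 1) * Real.exp (-r ^ 2 / 2) * (r ^ p * Real.exp (c * r ^ 2) ^ p)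
        = (r ^ ((n:ℝ) - 1) * r ^ p) *
            (Real.exp (-r ^ 2 / 2) * Real.exp (c * r ^ 2) ^ p) := by ring
      _ = r ^ ((n:ℝ) - 1 + p) * Real.exp (-b * r ^ 2) := by
          rw [← Real.rpow_add hr, hexp_combine r]
  have hLval : (∫⁻ r, ENNReal.ofReal (|u r| ^ p) ∂ muN n) = ENNReal.ofReal VL := by
    rw [lint_muN_eq n (A := 1) (g := fun r => |u r| ^ p)
        (hucont.abs.rpow_const (fun _ => Or.inr hp0.le)).measurable
        hqL hb0 zero_le_one ?_, ENNReal.ofReal_one, one_mul]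
    intro r hr
    beta_reduce
    have h1 : |u r| = Real.exp (c * r ^ 2) := abs_of_pos (Real.exp_pos _)
    rw [h1, hpow_cast r hr, one_mul, mul_assoc, hexp_combine r]
  have hMval : (∫⁻ r, ENNReal.ofReal (|deriv u r| ^ p) ∂ muN n)
      = ENNReal.ofReal ((α / p) ^ p) * ENNReal.ofReal VK := by
    rw [hderiv_eq]
    rw [lint_muN_eq n (A := (α / p) ^ p) (g := fun r => |Real.exp (c * r ^ 2) * (c * (2 * r))| ^ p)
        (((hucont.mul (continuous_const.mul (continuous_const.mul continuous_id))).abs.rpow_const (fun _ => Or.inr hp0.le)).measurable)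
        hqK hb0 (by positivity) ?_]
    intro r hr
    beta_reduce
    have h2c : 2 * c = α / p := by rw [hcdef]; field_simp
    have h1 : |Real.exp (c * r ^ 2) * (c * (2 * r))| = Real.exp (c * r ^ 2) * ((2 * c) * r) := by
      rw [abs_of_pos (by positivity)]; ring
    rw [h1, Real.mul_rpow (Real.exp_pos _).le (by positivity),
      Real.mul_rpow (by positivity) hr.le, hpow_cast r hr, h2c]
    calc r ^ ((n:ℝ) - 1) * Real.exp (-r ^ 2 / 2) *
          (Real.exp (c * r ^ 2) ^ p * ((α / p) ^ p * r ^ p))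
        = (α / p) ^ p * ((r ^ ((n:ℝ) - 1) * r ^ p) *
            (Real.exp (-r ^ 2 / 2) * Real.exp (c * r ^ 2) ^ p)) := by ring
      _ = (α / p) ^ p * (r ^ ((n:ℝ) - 1 + p) * Real.exp (-b * r ^ 2)) := by
          rw [← Real.rpow_add hr, hexp_combine r]
  -- use the hypothesis
  have Hu := H u hPC1
  rw [hKval, hLval, hMval] at Hu
  have Hreal : VK ≤ C₁' * VL + p ^ p * ((α / p) ^ p * VK) := by
    refine (ENNReal.ofReal_le_ofReal_iff (by positivity)).mp (Hu.trans ?_)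
    calc ENNReal.ofReal C₁ * ENNReal.ofReal VL +
          ENNReal.ofReal C₂ * (ENNReal.ofReal ((α / p) ^ p) * ENNReal.ofReal VK)
        ≤ ENNReal.ofReal C₁' * ENNReal.ofReal VL +
          ENNReal.ofReal (p ^ p) * (ENNReal.ofReal ((α / p) ^ p) * ENNReal.ofReal VK) := by
          gcongr <;> first
            | exact le_max_left _ _
            | exact hC₂
      _ = ENNReal.ofReal (C₁' * VL + p ^ p * ((α / p) ^ p * VK)) := by
          rw [← ENNReal.ofReal_mul (by positivity), ← ENNReal.ofReal_mul (by positivity),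
            ← ENNReal.ofReal_mul (by positivity), ← ENNReal.ofReal_add (by positivity)
              (by positivity)]
  have hsimp : p ^ p * ((α / p) ^ p * VK) = α ^ p * VK := by
    rw [Real.div_rpow hα0.le hp0.le]
    field_simp
  rw [hsimp] at Hreal
  have hαp : α ^ p ≤ α := by
    calc α ^ p ≤ α ^ (1:ℝ) :=
          Real.rpow_le_rpow_of_exponent_ge hα0 hα1.le (by linarith)
      _ = α := Real.rpow_one α
  have key : 2 * b * VK ≤ C₁' * VL := by nlinarith [hVKpos.le]
  -- extract the contradiction
  set e1 : ℝ := -((n:ℝ) - 1 + p + 1) / 2 with he1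
  set e2 : ℝ := -((n:ℝ) - 1 + 1) / 2 with he2
  have hbsplit : 2 * b * VK = b ^ ((2 - p) / 2) * b ^ e2 * GaK := by
    rw [hVKdef]
    have : b * b ^ e1 = b ^ ((2 - p) / 2) * b ^ e2 := by
      have h1 : b * b ^ e1 = b ^ (1 + e1) := by rw [Real.rpow_add hb0, Real.rpow_one]
      have h2 : b ^ ((2 - p) / 2) * b ^ e2 = b ^ ((2 - p) / 2 + e2) :=
        (Real.rpow_add hb0 _ _).symm
      rw [h1, h2]
      congr 1
      rw [he1, he2]; ring
    calc 2 * b * (b ^ e1 * (1 / 2) * GaK) = (b * b ^ e1) * GaK := by ring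
      _ = b ^ ((2 - p) / 2) * b ^ e2 * GaK := by rw [this]
  have hbe2 : 0 < b ^ e2 := Real.rpow_pos_of_pos hb0 _
  have hfin : b ^ ((2 - p) / 2) * GaK ≤ C₁' * GaL / 2 := by
    apply le_of_mul_le_mul_right _ hbe2
    calc b ^ ((2 - p) / 2) * GaK * b ^ e2 = 2 * b * VK := by rw [hbsplit]; ring
      _ ≤ C₁' * VL := key
      _ = C₁' * GaL / 2 * b ^ e2 := by rw [hVLdef]; ring
  have hbt : b ^ ((2 - p) / 2) = t ^ ((p - 2) / 2) := by
    rw [hbdef, ← Real.rpow_neg_one t, ← Real.rpow_mul ht0.le]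
    congr 1; ring
  rw [hbt] at hfin
  have hlt : C₁' * GaL < t ^ ((p - 2) / 2) * (2 * GaK) :=
    (div_lt_iff₀ (by positivity)).mp ht1
  nlinarith [hfin, hlt, hGaKpos]
end

section
/- Let n ≥ 1 and p > 2. If constants C₁, C₂ ≥ 0 are such that ∫₀^∞ (r|u(r)|)^p dμ_n(r) ≤ C₁ ∫₀^∞ |u(r)|^p dμ_n(r) + C₂ ∫₀^∞ |u'(r)|^p dμ_n(r) holds for all continuous and piecewise C¹ functions u:[0,∞)→ℝ, then C₁ ≥ 2^{p/2} Γ((n+p)/2) / Γ(n/2). -/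
open MeasureTheory Real Set Filter

lemma gauss_int {s : ℝ} (hs : -1 < s) :
    ∫ r in Set.Ioi (0:ℝ), r ^ s * Real.exp (-r ^ 2 / 2) =
      2 ^ ((s - 1) / 2) * Real.Gamma ((s + 1) / 2) := by
  have h1 : ∀ r : ℝ, r ^ s * Real.exp (-r ^ 2 / 2)
      = r ^ s * Real.exp (-(1/2) * r ^ (2:ℝ)) := by
    intro r
    rw [Real.rpow_two]
    ring_nf
  simp_rw [h1]
  rw [integral_rpow_mul_exp_neg_mul_rpow two_pos hs one_half_pos]
  rw [show ((1:ℝ)/2) = 2⁻¹ by norm_num, Real.inv_rpow (by norm_num),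
    ← Real.rpow_neg (by norm_num), ← Real.rpow_neg_one (2:ℝ),
    mul_right_comm]
  rw [show (2:ℝ) ^ (-(-(s + 1) / 2)) * Real.Gamma ((s + 1) / 2) * 2 ^ (-1:ℝ)
      = (2:ℝ) ^ (-(-(s + 1) / 2)) * 2 ^ (-1:ℝ) * Real.Gamma ((s + 1) / 2) from by ring,
    ← Real.rpow_add two_pos]
  ring_nf

lemma gauss_lint {s : ℝ} (hs : -1 < s) :
    ∫⁻ r in Set.Ioi (0:ℝ), ENNReal.ofReal (r ^ s * Real.exp (-r ^ 2 / 2)) =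
      ENNReal.ofReal (2 ^ ((s - 1) / 2) * Real.Gamma ((s + 1) / 2)) := by
  rw [← gauss_int hs, ← MeasureTheory.ofReal_integral_eq_lintegral_ofReal]
  · have h1 : ∀ r : ℝ, r ^ s * Real.exp (-r ^ 2 / 2)
        = r ^ s * Real.exp (-(1/2) * r ^ 2) := by
      intro r; ring_nf
    simp_rw [h1]
    exact integrableOn_rpow_mul_exp_neg_mul_sq one_half_pos hs
  · filter_upwards [ae_restrict_mem measurableSet_Ioi] with r hr
    have : (0:ℝ) < r := hr
    positivity

/-- Optimality of `C₁`: if `K ≤ C₁ L + C₂ 𝔐` holds for all continuous piecewise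
`C¹` functions `u`, then `C₁ ≥ 2^{p/2} Γ((n+p)/2) / Γ(n/2)`. -/
theorem stmt_10 (n : ℕ) (hn : 1 ≤ n) (p : ℝ) (hp : 2 < p)
    (C₁ C₂ : ℝ) (hC₁ : 0 ≤ C₁) (hC₂ : 0 ≤ C₂)
    (h : ∀ u : ℝ → ℝ, PiecewiseC1 u →
      (∫⁻ r, ENNReal.ofReal ((r * |u r|) ^ p) ∂ muN n) ≤
        ENNReal.ofReal C₁ * (∫⁻ r, ENNReal.ofReal (|u r| ^ p) ∂ muN n) +
        ENNReal.ofReal C₂ * (∫⁻ r, ENNReal.ofReal (|deriv u r| ^ p) ∂ muN n)) :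
    2 ^ (p / 2) * Real.Gamma ((n + p) / 2) / Real.Gamma (n / 2) ≤ C₁ := by
  -- plug in the constant function 1
  have hu : PiecewiseC1 (fun _ : ℝ => (1:ℝ)) := by
    refine ⟨continuousOn_const, ∅, Set.finite_empty,
      fun x _ => differentiableAt_const 1, ?_⟩
    simp only [deriv_const']
    exact continuousOn_const
  have key := h (fun _ => (1:ℝ)) hu
  simp only [deriv_const', abs_zero, abs_one, mul_one,
    Real.zero_rpow (by positivity : p ≠ 0), Real.one_rpow, ENNReal.ofReal_zero,
    lintegral_zero, mul_zero, add_zero, ENNReal.ofReal_one] at key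
  -- compute the two integrals
  have hmeas : Measurable
      (fun r : ℝ => ENNReal.ofReal (r ^ (n - 1) * Real.exp (-r ^ 2 / 2))) := by
    fun_prop
  have hn1 : (1:ℝ) ≤ (n:ℝ) := by exact_mod_cast hn
  have hcast : ((n - 1 : ℕ) : ℝ) = (n : ℝ) - 1 := by
    push_cast [Nat.cast_sub hn]; ring
  have hK : (∫⁻ r, ENNReal.ofReal (r ^ p) ∂ muN n) =
      ENNReal.ofReal (2 ^ (((n:ℝ) - 1 + p - 1) / 2) * Real.Gamma (((n:ℝ) - 1 + p + 1) / 2)) := by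
    rw [muN, lintegral_withDensity_eq_lintegral_mul _ hmeas (by fun_prop),
      ← gauss_lint (s := (n:ℝ) - 1 + p) (by linarith)]
    refine setLIntegral_congr_fun measurableSet_Ioi ?_
    intro r hr
    have hr0 : (0:ℝ) < r := hr
    simp only [Pi.mul_apply]
    rw [← ENNReal.ofReal_mul (by positivity)]
    congr 1
    rw [Real.rpow_add hr0, ← hcast, Real.rpow_natCast]
    ring
  have hL : (∫⁻ r, ENNReal.ofReal (1:ℝ) ∂ muN n) =
      ENNReal.ofReal (2 ^ (((n:ℝ) - 1 - 1) / 2) * Real.Gamma (((n:ℝ) - 1 + 1) / 2)) := by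
    rw [muN, lintegral_withDensity_eq_lintegral_mul _ hmeas (by fun_prop),
      ← gauss_lint (s := (n:ℝ) - 1) (by linarith)]
    refine setLIntegral_congr_fun measurableSet_Ioi ?_
    intro r hr
    have hr0 : (0:ℝ) < r := hr
    simp only [Pi.mul_apply, ENNReal.ofReal_one, mul_one]
    congr 1
    rw [← hcast, Real.rpow_natCast]
  rw [ENNReal.ofReal_one] at hL
  rw [hK, hL, ← ENNReal.ofReal_mul hC₁] at key
  -- back to reals
  have hΓ1 : 0 < Real.Gamma (((n:ℝ) - 1 + p + 1) / 2) := Real.Gamma_pos_of_pos (by linarith)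
  have hΓ2 : 0 < Real.Gamma (((n:ℝ) - 1 + 1) / 2) := Real.Gamma_pos_of_pos (by linarith)
  have key' : 2 ^ (((n:ℝ) - 1 + p - 1) / 2) * Real.Gamma (((n:ℝ) - 1 + p + 1) / 2) ≤
      C₁ * (2 ^ (((n:ℝ) - 1 - 1) / 2) * Real.Gamma (((n:ℝ) - 1 + 1) / 2)) := by
    have h2 : (0:ℝ) < 2 ^ (((n:ℝ) - 1 - 1) / 2) := Real.rpow_pos_of_pos two_pos _
    exact (ENNReal.ofReal_le_ofReal_iff (by positivity)).mp key
  have hΓn : Real.Gamma ((n:ℝ) / 2) = Real.Gamma (((n:ℝ) - 1 + 1) / 2) := by norm_num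
  have hΓnp : Real.Gamma (((n:ℝ) + p) / 2) = Real.Gamma (((n:ℝ) - 1 + p + 1) / 2) := by
    congr 1; ring
  rw [hΓn, hΓnp, div_le_iff₀ hΓ2]
  have h2 : (0:ℝ) < 2 ^ (((n:ℝ) - 1 - 1) / 2) := Real.rpow_pos_of_pos two_pos _
  refine le_of_mul_le_mul_right ?_ h2
  calc 2 ^ (p / 2) * Real.Gamma (((n:ℝ) - 1 + p + 1) / 2) * 2 ^ (((n:ℝ) - 1 - 1) / 2)
      = 2 ^ (p / 2) * 2 ^ (((n:ℝ) - 1 - 1) / 2) * Real.Gamma (((n:ℝ) - 1 + p + 1) / 2) := by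
        ring
    _ = 2 ^ (((n:ℝ) - 1 + p - 1) / 2) * Real.Gamma (((n:ℝ) - 1 + p + 1) / 2) := by
        rw [← Real.rpow_add two_pos]; ring_nf
    _ ≤ C₁ * (2 ^ (((n:ℝ) - 1 - 1) / 2) * Real.Gamma (((n:ℝ) - 1 + 1) / 2)) := key'
    _ = C₁ * Real.Gamma (((n:ℝ) - 1 + 1) / 2) * 2 ^ (((n:ℝ) - 1 - 1) / 2) := by ring
end

section
/- Let M:[0,∞)→[0,∞) be increasing and convex with M(0) = 0, and assume M(αx) ≤ α^{D_M} M(x) for all α ≥ 1 and x ≥ 0. Then for every ε ∈ (0,1] and all a, b ≥ 0, M(a)·b ≤ ε M(a) + ε^{−D_M} M(ab). -/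
open Real Set

/-- Lemma 7: if `M : [0,∞) → [0,∞)` is increasing and convex with `M(0) = 0` and
`M(αx) ≤ α^{D_M} M(x)` for `α ≥ 1`, then for every `ε ∈ (0,1]` and `a, b ≥ 0`,
`M(a)·b ≤ ε M(a) + ε^{−D_M} M(ab)`. -/
theorem stmt_12 (M : ℝ → ℝ) (DM : ℝ) (hDM : 0 < DM)
    (hmono : MonotoneOn M (Set.Ici 0))
    (hconv : ConvexOn ℝ (Set.Ici 0) M)
    (h0 : M 0 = 0)
    (hdbl : ∀ x : ℝ, 0 ≤ x → ∀ α : ℝ, 1 ≤ α → M (α * x) ≤ α ^ DM * M x)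
    (ε : ℝ) (hε : ε ∈ Set.Ioc (0 : ℝ) 1) (a b : ℝ) (ha : 0 ≤ a) (hb : 0 ≤ b) :
    M a * b ≤ ε * M a + ε ^ (-DM) * M (a * b) := by
  obtain ⟨hε0, hε1⟩ := hε
  have hMa : 0 ≤ M a := by
    have := hmono (self_mem_Ici) (mem_Ici.mpr ha) ha
    rwa [h0] at this
  have hMab : 0 ≤ M (a * b) := by
    have := hmono (self_mem_Ici) (mem_Ici.mpr (mul_nonneg ha hb)) (mul_nonneg ha hb)
    rwa [h0] at this
  have hεpow : (0:ℝ) < ε ^ (-DM) := Real.rpow_pos_of_pos hε0 _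
  rcases le_or_gt b ε with hbε | hbε
  · -- b ≤ ε : first term suffices
    have : M a * b ≤ ε * M a := by
      rw [mul_comm]
      exact mul_le_mul_of_nonneg_right hbε hMa
    nlinarith [mul_pos hεpow (lt_of_lt_of_le (by positivity : (0:ℝ) < 0 + 1) (by linarith : (0:ℝ) + 1 ≤ 1)), mul_nonneg hεpow.le hMab]
  · have hb0 : 0 < b := lt_trans hε0 hbε
    have h1ε : (1:ℝ) ≤ ε ^ (-DM) := by
      rw [show (1:ℝ) = ε ^ (0:ℝ) by simp [Real.rpow_zero]]
      exact Real.rpow_le_rpow_of_exponent_ge hε0 hε1 (by linarith)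
    rcases le_or_gt 1 b with hb1 | hb1
    · -- b ≥ 1 : convexity gives M a ≤ (1/b) M(ab)
      have key : M a ≤ b⁻¹ * M (a * b) := by
        have ht0 : (0:ℝ) ≤ b⁻¹ := by positivity
        have ht1 : b⁻¹ ≤ 1 := by
          rw [inv_le_one_iff₀]; right; exact hb1
        have := hconv.2 (mem_Ici.mpr (mul_nonneg ha hb)) (self_mem_Ici)
          ht0 (show (0:ℝ) ≤ 1 - b⁻¹ by linarith) (by ring)
        rw [h0, smul_eq_mul, smul_eq_mul, smul_eq_mul] at this
        calc M a = M (b⁻¹ * (a * b) + (1 - b⁻¹) * 0) := by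
              rw [mul_zero, add_zero, show b⁻¹ * (a * b) = a by field_simp]
          _ ≤ b⁻¹ * M (a * b) + (1 - b⁻¹) * 0 := by
              simpa using this
          _ = b⁻¹ * M (a * b) := by ring
      have : M a * b ≤ M (a * b) := by
        have := mul_le_mul_of_nonneg_right key hb0.le
        rw [inv_mul_eq_div, div_mul_cancel₀] at this
        · exact this
        · exact hb0.ne'
      calc M a * b ≤ M (a * b) := this
        _ = 1 * M (a * b) := by ring
        _ ≤ ε ^ (-DM) * M (a * b) := mul_le_mul_of_nonneg_right h1ε hMab
        _ ≤ ε * M a + ε ^ (-DM) * M (a * b) := by nlinarith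
    · -- ε < b < 1 : use hdbl with α = 1/b
      have h1b : (1:ℝ) ≤ b⁻¹ := one_le_inv_iff₀.mpr ⟨hb0, hb1.le⟩
      have key : M a ≤ b⁻¹ ^ DM * M (a * b) := by
        have := hdbl (a * b) (mul_nonneg ha hb) b⁻¹ h1b
        rwa [show b⁻¹ * (a * b) = a by field_simp] at this
      have hbpow : b⁻¹ ^ DM ≤ ε ^ (-DM) := by
        have heq : b⁻¹ ^ DM = b ^ (-DM) := by
          rw [Real.rpow_neg hb0.le, ← Real.inv_rpow hb0.le]
        rw [heq]
        exact Real.rpow_le_rpow_of_nonpos hε0 hbε.le (by linarith)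
      have step1 : M a * b ≤ M a := by nlinarith
      have step2 : M a ≤ ε ^ (-DM) * M (a * b) :=
        key.trans (mul_le_mul_of_nonneg_right hbpow hMab)
      nlinarith
end
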